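/- Let φ : ℝⁿ × [0, 1] → ℝ be three times continuously differentiable, and suppose x* satisfies ∇_x φ(x*, 0) = 0 and ∇²_{xx} φ(x*, 0) positive definite. Suppose φ(x, δ) = φ(x, 0) + δ² P(x, δ) with P twice continuously differentiable. Let x(δ) denote the C¹ path of local minimizers of φ(·, δ) near x* (from the implicit function theorem) and let {G_δ}_{δ>0} be a family of maps G_δ : ℝⁿ → ℝⁿ for which there exist δ̄ > 0, an open set B containing x*, and M > 0 such that for all 0 < δ ≤ δ̄ and x̃₀ ∈ B, the sequence x̃_{k+1} = x̃_k + G_δ(x̃_k) satisfies ‖x(δ) − x̃_{k+1}‖ ≤ M‖x(δ) − x̃_k‖² for all k. Consider the sequence generated by δ_k = max{min{‖∇_x φ(x_k, δ_{k−1})‖, δ_{k−1}}, δ_{k−1}²} and x_{k+1} = x_k + G_{δ_k}(x_k). Then there exist an open set B′ containing x* and δ′ ∈ (0, 1) such that whenever x₁ ∈ B′, δ₀ ≤ δ′, and x_k → x*, the convergence is R-quadratic: there is a sequence α_k → 0 converging quadratically to zero with ‖x_k − x*‖ ≤ α_k for all sufficiently large k. -/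

import Mathlib

open scoped RealInnerProductSpace

namespace RQaux

variable {E : Type*} [NormedAddCommGroup E] [InnerProductSpace ℝ E] [CompleteSpace E]

/-- `toDual.symm` as a real continuous linear map. -/
noncomputable def J : StrongDual ℝ E →L[ℝ] E :=
  LinearMap.mkContinuous
    { toFun := fun l => (InnerProductSpace.toDual ℝ E).symm l
      map_add' := fun a b => map_add _ a b
      map_smul' := fun c l => by
        rw [LinearIsometryEquiv.map_smulₛₗ]; simp }
    1 (fun l => by simp)

lemma J_apply (l : StrongDual ℝ E) : J l = (InnerProductSpace.toDual ℝ E).symm l := rfl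

lemma norm_J (l : StrongDual ℝ E) : ‖(J l : E)‖ = ‖l‖ := by
  rw [J_apply]; exact LinearIsometryEquiv.norm_map _ l

lemma gradient_eq (f : E → ℝ) (x : E) : gradient f x = J (fderiv ℝ f x) := rfl

lemma partial_fderiv (f : E × ℝ → ℝ) (hf : Differentiable ℝ f) (x : E) (δ : ℝ) :
    fderiv ℝ (fun z => f (z, δ)) x
      = (fderiv ℝ f (x, δ)).comp (ContinuousLinearMap.inl ℝ E ℝ) :=
  ((hf (x, δ)).hasFDerivAt.comp x (hasFDerivAt_prodMk_left x δ)).fderiv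

lemma comp_inl_norm_le (A : (E × ℝ) →L[ℝ] ℝ) :
    ‖A.comp (ContinuousLinearMap.inl ℝ E ℝ)‖ ≤ ‖A‖ := by
  refine ContinuousLinearMap.opNorm_le_bound _ (norm_nonneg A) fun v => ?_
  have h : ‖(A.comp (ContinuousLinearMap.inl ℝ E ℝ)) v‖ = ‖A (v, 0)‖ := rfl
  rw [h]
  calc ‖A (v, (0:ℝ))‖ ≤ ‖A‖ * ‖((v, (0:ℝ)) : E × ℝ)‖ := A.le_opNorm _
  _ = ‖A‖ * ‖v‖ := by rw [Prod.norm_def]; simp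

end RQaux

open RQaux

set_option maxHeartbeats 1000000 in
/-- Theorem 6.3. Let `φ(x, δ) = φ(x, 0) + δ²P(x, δ)` be `C³` with
`∇_x φ(x*, 0) = 0` and `∇²_{xx} φ(x*, 0) ≻ 0`, let `δ ↦ x(δ)` be the `C¹` path of local
minimizers of `φ(·, δ)` near `x*`, and let `{G_δ}` be a family of update maps converging
quadratically (with a uniform constant `M`) to `x(δ)` from a neighborhood `B` of `x*` for
all `0 < δ ≤ δ̄`. Consider the iteration
`δ_k = max{min{‖∇_x φ(x_k, δ_{k−1})‖, δ_{k−1}}, δ_{k−1}²}`, `x_{k+1} = x_k + G_{δ_k}(x_k)`.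
Then there are an open `B′ ∋ x*` and `δ′ ∈ (0, 1)` such that whenever `x₁ ∈ B′`,
`0 < δ₀ ≤ δ′` and `x_k → x*`, the convergence is R-quadratic: `‖x_k − x*‖` is eventually
majorized by a sequence `α_k → 0` converging quadratically to zero. -/
theorem regularized_algorithm_R_quadratic
    {n : ℕ}
    (φ : EuclideanSpace ℝ (Fin n) × ℝ → ℝ) (hφ : ContDiff ℝ 3 φ)
    (P : EuclideanSpace ℝ (Fin n) × ℝ → ℝ) (hP : ContDiff ℝ 2 P)
    (hdecomp : ∀ x δ, φ (x, δ) = φ (x, 0) + δ ^ 2 * P (x, δ))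
    (xstar : EuclideanSpace ℝ (Fin n))
    (hgrad0 : gradient (fun z => φ (z, 0)) xstar = 0)
    (hpos : ∀ v : EuclideanSpace ℝ (Fin n), v ≠ 0 →
      0 < ⟪v, fderiv ℝ (gradient fun z => φ (z, (0 : ℝ))) xstar v⟫)
    -- the C¹ path of local minimizers from the implicit function theorem
    (xpath : ℝ → EuclideanSpace ℝ (Fin n)) (δpath : ℝ) (hδpath : 0 < δpath)
    (hxpath0 : xpath 0 = xstar)
    (hxpathC1 : ContDiffOn ℝ 1 xpath (Set.Ioo (-δpath) δpath))
    (hxpathcrit : ∀ δ : ℝ, |δ| < δpath → gradient (fun z => φ (z, δ)) (xpath δ) = 0)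
    (hxpathmin : ∀ δ : ℝ, |δ| < δpath → IsLocalMin (fun z => φ (z, δ)) (xpath δ))
    -- the family of quadratically convergent update maps
    (G : ℝ → EuclideanSpace ℝ (Fin n) → EuclideanSpace ℝ (Fin n))
    (δbar : ℝ) (hδbar : 0 < δbar) (hδbarpath : δbar < δpath)
    (B : Set (EuclideanSpace ℝ (Fin n))) (hBopen : IsOpen B) (hxstarB : xstar ∈ B)
    (M : ℝ) (hM : 0 < M)
    (hG : ∀ δ : ℝ, 0 < δ → δ ≤ δbar →
      ∀ xt : ℕ → EuclideanSpace ℝ (Fin n), xt 0 ∈ B →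
        (∀ k, xt (k + 1) = xt k + G δ (xt k)) →
        ∀ k, ‖xpath δ - xt (k + 1)‖ ≤ M * ‖xpath δ - xt k‖ ^ 2) :
    ∃ B' : Set (EuclideanSpace ℝ (Fin n)), IsOpen B' ∧ xstar ∈ B' ∧
    ∃ δ' : ℝ, 0 < δ' ∧ δ' < 1 ∧
      ∀ (xs : ℕ → EuclideanSpace ℝ (Fin n)) (ds : ℕ → ℝ),
        xs 1 ∈ B' → 0 < ds 0 → ds 0 ≤ δ' →
        (∀ k : ℕ, 1 ≤ k → ds k =
          max (min ‖gradient (fun z => φ (z, ds (k - 1))) (xs k)‖ (ds (k - 1)))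
            (ds (k - 1) ^ 2)) →
        (∀ k : ℕ, 1 ≤ k → xs (k + 1) = xs k + G (ds k) (xs k)) →
        Filter.Tendsto xs Filter.atTop (nhds xstar) →
        ∃ α : ℕ → ℝ,
          Filter.Tendsto α Filter.atTop (nhds 0) ∧
          (∃ Mq : ℝ, 0 < Mq ∧ ∃ K : ℕ, ∀ k ≥ K, α (k + 1) ≤ Mq * α k ^ 2) ∧
          ∃ K : ℕ, ∀ k ≥ K, ‖xs k - xstar‖ ≤ α k := by
  classical
  have hφd : Differentiable ℝ φ := hφ.differentiable (by norm_num)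
  have hPd : Differentiable ℝ P := hP.differentiable (by norm_num)
  have hF : ContDiff ℝ 2 (fderiv ℝ φ) := hφ.fderiv_right (by norm_num)
  -- gradient formulas
  have hgrad_eq : ∀ (x : EuclideanSpace ℝ (Fin n)) (δ : ℝ), gradient (fun z => φ (z, δ)) x
      = J ((fderiv ℝ φ (x, δ)).comp (ContinuousLinearMap.inl ℝ (EuclideanSpace ℝ (Fin n)) ℝ)) := by
    intro x δ
    rw [RQaux.gradient_eq, partial_fderiv φ hφd]
  have hgradP_eq : ∀ (x : EuclideanSpace ℝ (Fin n)) (δ : ℝ), gradient (fun z => P (z, δ)) x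
      = J ((fderiv ℝ P (x, δ)).comp (ContinuousLinearMap.inl ℝ (EuclideanSpace ℝ (Fin n)) ℝ)) := by
    intro x δ
    rw [RQaux.gradient_eq, partial_fderiv P hPd]
  -- decomposition of the gradient
  have hsplit : ∀ (x : EuclideanSpace ℝ (Fin n)) (δ : ℝ), gradient (fun z => φ (z, δ)) x
      = gradient (fun z => φ (z, 0)) x + δ ^ 2 • gradient (fun z => P (z, δ)) x := by
    intro x δ
    have hfun : (fun z : EuclideanSpace ℝ (Fin n) => φ (z, δ)) = fun z : EuclideanSpace ℝ (Fin n) => φ (z, 0) + δ ^ 2 * P (z, δ) :=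
      funext fun z => hdecomp z δ
    have h1 : DifferentiableAt ℝ (fun z : EuclideanSpace ℝ (Fin n) => φ (z, 0)) x :=
      (hφd (x, 0)).comp x (differentiableAt_id.prodMk (differentiableAt_const 0))
    have h2 : DifferentiableAt ℝ (fun z : EuclideanSpace ℝ (Fin n) => P (z, δ)) x :=
      (hPd (x, δ)).comp x (differentiableAt_id.prodMk (differentiableAt_const δ))
    rw [RQaux.gradient_eq, RQaux.gradient_eq, RQaux.gradient_eq, hfun, fderiv_fun_add h1 (h2.const_mul _),
      fderiv_const_mul h2, map_add, map_smul]
  -- norm of partial gradient of P bounded by full fderiv norm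
  have hgP_le : ∀ (x : EuclideanSpace ℝ (Fin n)) (δ : ℝ),
      ‖gradient (fun z => P (z, δ)) x‖ ≤ ‖fderiv ℝ P (x, δ)‖ := by
    intro x δ
    rw [hgradP_eq, norm_J]
    exact comp_inl_norm_le _
  -- the compact set where uniform bounds hold
  set s₂ : Set (EuclideanSpace ℝ (Fin n) × ℝ) :=
    Metric.closedBall ((xstar, (0:ℝ))) 2 with hs₂def
  have hs₂c : IsCompact s₂ := isCompact_closedBall _ _
  have hmem : ∀ (x : EuclideanSpace ℝ (Fin n)) (δ : ℝ),
      ‖x - xstar‖ ≤ 2 → |δ| ≤ 2 → ((x, δ) : EuclideanSpace ℝ (Fin n) × ℝ) ∈ s₂ := by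
    intro x δ h1 h2
    rw [hs₂def, Metric.mem_closedBall, Prod.dist_eq]
    refine max_le ?_ ?_
    · rwa [dist_eq_norm]
    · rwa [Real.dist_eq, sub_zero]
  -- bound on ‖fderiv P‖ on s₂
  obtain ⟨CP0, hCP0⟩ := hs₂c.exists_bound_of_continuousOn
    ((hP.continuous_fderiv (by norm_num)).continuousOn (s := s₂))
  set CP := max CP0 0 with hCPdef
  have hCPnn : 0 ≤ CP := le_max_right _ _
  have hCP : ∀ p ∈ s₂, ‖fderiv ℝ P p‖ ≤ CP := fun p hp =>
    le_trans (hCP0 p hp) (le_max_left _ _)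
  -- Lipschitz constant for fderiv φ on s₂
  obtain ⟨L0, hL0⟩ := hs₂c.exists_bound_of_continuousOn
    ((hF.continuous_fderiv (by norm_num)).continuousOn (s := s₂))
  set L := max L0 0 with hLdef
  have hLnn : 0 ≤ L := le_max_right _ _
  have hFlip : ∀ p ∈ s₂, ∀ q ∈ s₂, ‖fderiv ℝ φ p - fderiv ℝ φ q‖ ≤ L * ‖p - q‖ := by
    intro p hp q hq
    have := (convex_closedBall ((xstar, (0:ℝ))) 2).norm_image_sub_le_of_norm_fderiv_le
      (f := fderiv ℝ φ) (C := L) (fun r _ => (hF.differentiable (by norm_num)).differentiableAt)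
      (fun r hr => le_trans (hL0 r hr) (le_max_left _ _)) hq hp
    exact this
  -- Lipschitz bound for the partial gradient of φ
  have hgradLip : ∀ (x y : EuclideanSpace ℝ (Fin n)) (δ : ℝ),
      ((x, δ) : EuclideanSpace ℝ (Fin n) × ℝ) ∈ s₂ →
      ((y, δ) : EuclideanSpace ℝ (Fin n) × ℝ) ∈ s₂ →
      ‖gradient (fun z => φ (z, δ)) x - gradient (fun z => φ (z, δ)) y‖ ≤ L * ‖x - y‖ := by
    intro x y δ hx hy
    rw [hgrad_eq, hgrad_eq, ← map_sub, norm_J, ← ContinuousLinearMap.sub_comp]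
    refine le_trans (comp_inl_norm_le _) (le_trans (hFlip _ hx _ hy) ?_)
    have hnorm : ‖((x, δ) : EuclideanSpace ℝ (Fin n) × ℝ) - (y, δ)‖ = ‖x - y‖ := by
      rw [Prod.mk_sub_mk, Prod.norm_def]
      simp
    rw [hnorm]
  -- differentiability of the gradient map at 0-slice
  have hg0fun : (gradient fun z : EuclideanSpace ℝ (Fin n) => φ (z, (0:ℝ)))
      = fun x : EuclideanSpace ℝ (Fin n) =>
        J ((fderiv ℝ φ (x, (0:ℝ))).comp (ContinuousLinearMap.inl ℝ (EuclideanSpace ℝ (Fin n)) ℝ)) :=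
    funext fun x => hgrad_eq x 0
  have hg0diff : DifferentiableAt ℝ (gradient fun z : EuclideanSpace ℝ (Fin n) => φ (z, (0:ℝ))) xstar := by
    rw [hg0fun]
    set T := (ContinuousLinearMap.compL ℝ (EuclideanSpace ℝ (Fin n)) (EuclideanSpace ℝ (Fin n) × ℝ) ℝ).flip
      (ContinuousLinearMap.inl ℝ (EuclideanSpace ℝ (Fin n)) ℝ) with hTdef
    have hTeq : ∀ A : (EuclideanSpace ℝ (Fin n) × ℝ) →L[ℝ] ℝ,
        T A = A.comp (ContinuousLinearMap.inl ℝ (EuclideanSpace ℝ (Fin n)) ℝ) := fun A => rfl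
    have : DifferentiableAt ℝ (fun x : EuclideanSpace ℝ (Fin n) =>
        (J (T (fderiv ℝ φ (x, (0:ℝ)))) : EuclideanSpace ℝ (Fin n))) xstar := by
      apply (J.differentiable.comp T.differentiable).differentiableAt.comp
      exact ((hF.differentiable (by norm_num)) ((xstar, (0:ℝ)))).comp xstar
        (differentiableAt_id.prodMk (differentiableAt_const 0))
    simpa [hTeq] using this
  set H := fderiv ℝ (gradient fun z : EuclideanSpace ℝ (Fin n) => φ (z, (0:ℝ))) xstar with hHdef
  have hH : HasFDerivAt (gradient fun z : EuclideanSpace ℝ (Fin n) => φ (z, (0:ℝ))) H xstar :=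
    hg0diff.hasFDerivAt
  -- coercivity constant m
  obtain ⟨m, hmpos, hm⟩ : ∃ m : ℝ, 0 < m ∧
      ∀ v : EuclideanSpace ℝ (Fin n), m * ‖v‖ ^ 2 ≤ ⟪v, H v⟫ := by
    by_cases hS : (Metric.sphere (0 : EuclideanSpace ℝ (Fin n)) 1).Nonempty
    · have hcont : Continuous fun v : EuclideanSpace ℝ (Fin n) => ⟪v, H v⟫ :=
        continuous_id.inner H.continuous
      obtain ⟨v0, hv0S, hmin⟩ := (isCompact_sphere (0 : EuclideanSpace ℝ (Fin n)) 1).exists_isMinOn hS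
        hcont.continuousOn
      have hv0norm : ‖v0‖ = 1 := by simpa using hv0S
      have hv0ne : v0 ≠ 0 := by
        intro h; rw [h, norm_zero] at hv0norm; norm_num at hv0norm
      refine ⟨⟪v0, H v0⟫, hpos v0 hv0ne, fun v => ?_⟩
      rcases eq_or_ne v 0 with rfl | hv
      · simp
      · have hvpos : 0 < ‖v‖ := norm_pos_iff.mpr hv
        have hw : (‖v‖⁻¹ • v) ∈ Metric.sphere (0 : EuclideanSpace ℝ (Fin n)) 1 := by
          simp [norm_smul, abs_of_pos (inv_pos.mpr hvpos), inv_mul_cancel₀ (ne_of_gt hvpos)]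
        have h1 : ⟪v0, H v0⟫ ≤ ⟪(‖v‖⁻¹ • v : EuclideanSpace ℝ (Fin n)), H (‖v‖⁻¹ • v)⟫ := hmin hw
        have h2 : ⟪(‖v‖⁻¹ • v : EuclideanSpace ℝ (Fin n)), H (‖v‖⁻¹ • v)⟫
            = ‖v‖⁻¹ * (‖v‖⁻¹ * ⟪v, H v⟫) := by
          rw [map_smul, real_inner_smul_left, real_inner_smul_right]
        rw [h2] at h1
        have h3 : ⟪v0, H v0⟫ * ‖v‖ ^ 2 ≤ ⟪v, H v⟫ := by
          have hinv : 0 < ‖v‖⁻¹ := inv_pos.mpr hvpos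
          have := mul_le_mul_of_nonneg_left h1 (le_of_lt (mul_pos hvpos hvpos))
          have hcalc : ‖v‖ * ‖v‖ * (‖v‖⁻¹ * (‖v‖⁻¹ * ⟪v, H v⟫)) = ⟪v, H v⟫ := by
            field_simp
          rw [hcalc] at this
          nlinarith [this]
        exact h3
    · refine ⟨1, one_pos, fun v => ?_⟩
      have hv : v = 0 := by
        by_contra h
        have hvpos : 0 < ‖v‖ := norm_pos_iff.mpr h
        exact hS ⟨‖v‖⁻¹ • v, by
          simp [norm_smul, abs_of_pos (inv_pos.mpr hvpos), inv_mul_cancel₀ (ne_of_gt hvpos)]⟩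
      simp [hv]
  have hHlow : ∀ v : EuclideanSpace ℝ (Fin n), m * ‖v‖ ≤ ‖H v‖ := by
    intro v
    rcases eq_or_ne v 0 with rfl | hv
    · simp
    · have hvpos : 0 < ‖v‖ := norm_pos_iff.mpr hv
      have h1 := hm v
      have h2 : ⟪v, H v⟫ ≤ ‖v‖ * ‖H v‖ := real_inner_le_norm _ _
      nlinarith [h1, h2, hvpos, norm_nonneg (H v)]
  -- lower bound on the unperturbed gradient near xstar
  have hlo := (hH.isLittleO).def (half_pos hmpos)
  rw [Metric.eventually_nhds_iff] at hlo
  obtain ⟨r₁, hr₁pos, hr₁⟩ := hlo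
  have hg0low : ∀ x : EuclideanSpace ℝ (Fin n), dist x xstar < r₁ →
      m / 2 * ‖x - xstar‖ ≤ ‖gradient (fun z => φ (z, (0:ℝ))) x‖ := by
    intro x hx
    have h1 := hr₁ hx
    rw [hgrad0, sub_zero] at h1
    have h2 := hHlow (x - xstar)
    have h3 : ‖H (x - xstar)‖ - ‖gradient (fun z => φ (z, (0:ℝ))) x‖
        ≤ ‖gradient (fun z => φ (z, (0:ℝ))) x - H (x - xstar)‖ := by
      rw [norm_sub_rev]
      exact norm_sub_norm_le _ _
    have h4 : ‖gradient (fun z => φ (z, (0:ℝ))) x - H (x - xstar)‖ ≤ m / 2 * ‖x - xstar‖ := h1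
    linarith
  -- path continuity at 0
  have hxc : Filter.Tendsto xpath (nhds 0) (nhds xstar) := by
    have h0mem : Set.Ioo (-δpath) δpath ∈ nhds (0:ℝ) :=
      isOpen_Ioo.mem_nhds ⟨by linarith, hδpath⟩
    have := (hxpathC1.continuousOn.continuousAt h0mem)
    rwa [ContinuousAt, hxpath0] at this
  have hr₁1pos : 0 < min r₁ 1 := lt_min hr₁pos one_pos
  have hev2 : ∀ᶠ δ in nhds (0:ℝ), dist (xpath δ) xstar < min r₁ 1 :=
    hxc (Metric.ball_mem_nhds xstar hr₁1pos)
  rw [Metric.eventually_nhds_iff] at hev2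
  obtain ⟨ε₂, hε₂pos, hε₂⟩ := hev2
  have hε₂' : ∀ δ : ℝ, |δ| < ε₂ → dist (xpath δ) xstar < min r₁ 1 := by
    intro δ hδ
    exact hε₂ (by rwa [Real.dist_eq, sub_zero])
  -- C: the path bound constant
  set C := 2 * CP / m with hCdef
  have hCnn : 0 ≤ C := by positivity
  have hpathb : ∀ δ : ℝ, 0 ≤ δ → δ ≤ 1 → |δ| < ε₂ → |δ| < δpath →
      ‖xpath δ - xstar‖ ≤ C * δ ^ 2 := by
    intro δ h0 h1 h2 h3
    have hcrit := hxpathcrit δ h3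
    have hsp := hsplit (xpath δ) δ
    rw [hcrit] at hsp
    have hneg : gradient (fun z => φ (z, (0:ℝ))) (xpath δ)
        = -(δ ^ 2 • gradient (fun z => P (z, δ)) (xpath δ)) := by
      have := hsp.symm
      linear_combination (norm := module) this
    have hnear := hε₂' δ h2
    have hlow := hg0low (xpath δ) (lt_of_lt_of_le hnear (min_le_left _ _))
    rw [hneg] at hlow
    have hmemp : ((xpath δ, δ) : EuclideanSpace ℝ (Fin n) × ℝ) ∈ s₂ := by
      apply hmem
      · have : dist (xpath δ) xstar ≤ 1 := le_of_lt (lt_of_lt_of_le hnear (min_le_right _ _))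
        rw [dist_eq_norm] at this; linarith
      · rw [abs_of_nonneg h0]; linarith
    have hgPb : ‖gradient (fun z => P (z, δ)) (xpath δ)‖ ≤ CP :=
      le_trans (hgP_le _ _) (hCP _ hmemp)
    have hrhs : ‖-(δ ^ 2 • gradient (fun z => P (z, δ)) (xpath δ))‖ ≤ CP * δ ^ 2 := by
      rw [norm_neg, norm_smul, Real.norm_eq_abs, abs_of_nonneg (sq_nonneg δ)]
      nlinarith [hgPb, sq_nonneg δ, norm_nonneg (gradient (fun z => P (z, δ)) (xpath δ))]
    have hfin : m / 2 * ‖xpath δ - xstar‖ ≤ CP * δ ^ 2 := le_trans hlow hrhs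
    rw [hCdef, div_mul_eq_mul_div, le_div_iff₀ hmpos]
    nlinarith [hfin]
  -- constants
  set Mq := max (M * (C + 1) ^ 2 + C) (max (L * M * (C + 1) ^ 2) 1) with hMqdef
  have hMq1 : 1 ≤ Mq := le_trans (le_max_right _ _) (le_max_right _ _)
  have hMqpos : 0 < Mq := lt_of_lt_of_le one_pos hMq1
  set δ' := min (min δbar (ε₂ / 2)) (min (1 / (2 * Mq)) 1) with hδ'def
  have hδ'pos : 0 < δ' := by
    apply lt_min (lt_min hδbar (by positivity)) (lt_min (by positivity) one_pos)
  have hδ'lt1 : δ' < 1 := by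
    have h1 : δ' ≤ 1 / (2 * Mq) := le_trans (min_le_right _ _) (min_le_left _ _)
    have h2 : 1 / (2 * Mq) ≤ 1 / 2 :=
      one_div_le_one_div_of_le (by norm_num) (by linarith)
    linarith
  refine ⟨B, hBopen, hxstarB, δ', hδ'pos, hδ'lt1, ?_⟩
  intro xs ds hx1 hds0pos hds0le hd hx hconv
  have hδ'le1 : δ' ≤ 1 := hδ'lt1.le
  have hδ'δbar : δ' ≤ δbar := le_trans (min_le_left _ _) (min_le_left _ _)
  have hδ'ε₂ : δ' < ε₂ := by
    have : δ' ≤ ε₂ / 2 := le_trans (min_le_left _ _) (min_le_right _ _)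
    linarith
  have hδ'Mq : δ' ≤ 1 / (2 * Mq) := le_trans (min_le_right _ _) (min_le_left _ _)
  -- the sequence ds stays in (0, δ']
  have hds : ∀ k, 0 < ds k ∧ ds k ≤ δ' := by
    intro k
    induction k with
    | zero => exact ⟨hds0pos, hds0le⟩
    | succ k ih =>
      have hrec := hd (k + 1) (by omega)
      simp only [Nat.add_sub_cancel] at hrec
      constructor
      · rw [hrec]
        exact lt_of_lt_of_le (pow_pos ih.1 2) (le_max_right _ _)
      · rw [hrec]
        apply max_le (le_trans (min_le_right _ _) ih.2)
        nlinarith [ih.1, ih.2, hδ'le1]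
  -- eventual closeness
  have hevB : ∀ᶠ k in Filter.atTop, xs k ∈ B := hconv.eventually_mem (hBopen.mem_nhds hxstarB)
  have hevn : ∀ᶠ k in Filter.atTop, ‖xs k - xstar‖ < min (1 / (2 * Mq)) 1 := by
    have := hconv.eventually_mem (Metric.ball_mem_nhds xstar (lt_min (by positivity : (0:ℝ) < 1/(2*Mq)) one_pos))
    filter_upwards [this] with k hk
    rwa [Metric.mem_ball, dist_eq_norm] at hk
  obtain ⟨K0, hK0⟩ := Filter.eventually_atTop.mp (hevB.and hevn)
  set K := max K0 1 with hKdef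
  -- the per-step quadratic estimate
  have key : ∀ k, K ≤ k →
      ‖xs (k + 1) - xstar‖ ≤ Mq * (max ‖xs k - xstar‖ (ds k)) ^ 2 ∧
      ds (k + 1) ≤ Mq * (max ‖xs k - xstar‖ (ds k)) ^ 2 := by
    intro k hk
    obtain ⟨hdpos, hdle⟩ := hds k
    have hkK0 : K0 ≤ k := le_trans (le_max_left _ _) hk
    have hk1 : 1 ≤ k := le_trans (le_max_right _ _) hk
    obtain ⟨hkB, hkn⟩ := hK0 k hkK0
    obtain ⟨hk1B, hk1n⟩ := hK0 (k + 1) (by omega)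
    set ak := max ‖xs k - xstar‖ (ds k) with hakdef
    have hakn : 0 ≤ ak := le_trans (norm_nonneg _) (le_max_left _ _)
    have hak1 : ak ≤ 1 := by
      apply max_le
      · exact le_of_lt (lt_of_lt_of_le hkn (min_le_right _ _))
      · linarith
    have he_le : ‖xs k - xstar‖ ≤ ak := le_max_left _ _
    have hd_le : ds k ≤ ak := le_max_right _ _
    -- hG application with the constant-δ auxiliary sequence
    have hGk : ‖xpath (ds k) - xs (k + 1)‖ ≤ M * ‖xpath (ds k) - xs k‖ ^ 2 := by
      set xt : ℕ → EuclideanSpace ℝ (Fin n) :=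
        fun j => Nat.rec (xs k) (fun _ ih => ih + G (ds k) ih) j with hxtdef
      have h0 : xt 0 = xs k := rfl
      have hrec : ∀ j, xt (j + 1) = xt j + G (ds k) (xt j) := fun j => rfl
      have h1 : xt (0 + 1) = xs k + G (ds k) (xs k) := rfl
      rw [← hx k hk1] at h1
      have := hG (ds k) hdpos (le_trans hdle hδ'δbar) xt (h0 ▸ hkB) hrec 0
      rwa [h1, h0] at this
    have hdabs : |ds k| < ε₂ := by
      rw [abs_of_pos hdpos]; linarith
    have hdpath : |ds k| < δpath := by
      rw [abs_of_pos hdpos]; linarith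
    have hpb : ‖xpath (ds k) - xstar‖ ≤ C * ds k ^ 2 :=
      hpathb (ds k) hdpos.le (by linarith) hdabs hdpath
    have hpnear : ‖xpath (ds k) - xstar‖ ≤ 1 := by
      have := hε₂' (ds k) hdabs
      rw [dist_eq_norm] at this
      exact le_of_lt (lt_of_lt_of_le this (min_le_right _ _))
    have hstep1 : ‖xpath (ds k) - xs k‖ ≤ (C + 1) * ak := by
      have htri : ‖xpath (ds k) - xs k‖ ≤ ‖xpath (ds k) - xstar‖ + ‖xs k - xstar‖ := by
        rw [← dist_eq_norm, ← dist_eq_norm, ← dist_eq_norm, dist_comm (xs k) xstar]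
        exact dist_triangle _ _ _
      have hsq : ds k ^ 2 ≤ ds k := by
        calc ds k ^ 2 = ds k * ds k := sq (ds k) ▸ by ring
          _ ≤ 1 * ds k := mul_le_mul_of_nonneg_right (by linarith) hdpos.le
          _ = ds k := one_mul _
      have hd2 : ds k ^ 2 ≤ ak := le_trans hsq hd_le
      have hCd : C * ds k ^ 2 ≤ C * ak := mul_le_mul_of_nonneg_left hd2 hCnn
      linarith [hpb, htri, he_le]
    have hq : ‖xpath (ds k) - xs (k + 1)‖ ≤ M * (C + 1) ^ 2 * ak ^ 2 := by
      refine le_trans hGk ?_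
      have hca : (0:ℝ) ≤ (C + 1) * ak := mul_nonneg (by linarith) hakn
      have h := mul_le_mul hstep1 hstep1 (norm_nonneg _) hca
      calc M * ‖xpath (ds k) - xs k‖ ^ 2
          = M * (‖xpath (ds k) - xs k‖ * ‖xpath (ds k) - xs k‖) := by ring
        _ ≤ M * (((C + 1) * ak) * ((C + 1) * ak)) := mul_le_mul_of_nonneg_left h hM.le
        _ = M * (C + 1) ^ 2 * ak ^ 2 := by ring
    constructor
    · have htri : ‖xs (k + 1) - xstar‖ ≤ ‖xpath (ds k) - xs (k + 1)‖ + ‖xpath (ds k) - xstar‖ := by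
        rw [← dist_eq_norm, ← dist_eq_norm, ← dist_eq_norm, dist_comm (xpath (ds k)) (xs (k+1))]
        exact dist_triangle _ _ _
      have hd2 : ds k ^ 2 ≤ ak ^ 2 := pow_le_pow_left₀ hdpos.le hd_le 2
      have hMq' : M * (C + 1) ^ 2 + C ≤ Mq := le_max_left _ _
      have hCd : C * ds k ^ 2 ≤ C * ak ^ 2 := mul_le_mul_of_nonneg_left hd2 hCnn
      have hMqak : (M * (C + 1) ^ 2 + C) * ak ^ 2 ≤ Mq * ak ^ 2 :=
        mul_le_mul_of_nonneg_right hMq' (sq_nonneg ak)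
      have hring : (M * (C + 1) ^ 2 + C) * ak ^ 2 = M * (C + 1) ^ 2 * ak ^ 2 + C * ak ^ 2 := by
        ring
      linarith [hq, hpb, htri]
    · have hrec := hd (k + 1) (by omega)
      simp only [Nat.add_sub_cancel] at hrec
      rw [hrec]
      apply max_le
      · refine le_trans (min_le_left _ _) ?_
        have hcrit : gradient (fun z => φ (z, ds k)) (xpath (ds k)) = 0 :=
          hxpathcrit (ds k) hdpath
        have hm1 : ((xs (k + 1), ds k) : EuclideanSpace ℝ (Fin n) × ℝ) ∈ s₂ := by
          apply hmem
          · have := lt_of_lt_of_le hk1n (min_le_right _ _); linarith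
          · rw [abs_of_pos hdpos]; linarith
        have hm2 : ((xpath (ds k), ds k) : EuclideanSpace ℝ (Fin n) × ℝ) ∈ s₂ := by
          apply hmem
          · linarith
          · rw [abs_of_pos hdpos]; linarith
        have hlip := hgradLip (xs (k + 1)) (xpath (ds k)) (ds k) hm1 hm2
        rw [hcrit, sub_zero] at hlip
        have hnr : ‖xs (k + 1) - xpath (ds k)‖ = ‖xpath (ds k) - xs (k + 1)‖ := norm_sub_rev _ _
        rw [hnr] at hlip
        have hMq'' : L * M * (C + 1) ^ 2 ≤ Mq := le_trans (le_max_left _ _) (le_max_right _ _)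
        calc ‖gradient (fun z => φ (z, ds k)) (xs (k + 1))‖
            ≤ L * ‖xpath (ds k) - xs (k + 1)‖ := hlip
          _ ≤ L * (M * (C + 1) ^ 2 * ak ^ 2) := by
              exact mul_le_mul_of_nonneg_left hq hLnn
          _ ≤ Mq * ak ^ 2 := by
              have := mul_le_mul_of_nonneg_right hMq'' (sq_nonneg ak)
              have hring : L * (M * (C + 1) ^ 2 * ak ^ 2) = L * M * (C + 1) ^ 2 * ak ^ 2 := by
                ring
              linarith
      · have hd2 : ds k ^ 2 ≤ ak ^ 2 := pow_le_pow_left₀ hdpos.le hd_le 2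
        have := mul_le_mul_of_nonneg_right hMq1 (sq_nonneg ak)
        rw [one_mul] at this
        linarith
  -- the majorizing sequence
  set α : ℕ → ℝ := fun k => max ‖xs k - xstar‖ (ds k) with hαdef
  have hαnn : ∀ k, 0 ≤ α k := fun k => le_trans (norm_nonneg _) (le_max_left _ _)
  have hquad : ∀ k ≥ K, α (k + 1) ≤ Mq * α k ^ 2 := by
    intro k hk
    exact max_le (key k hk).1 (key k hk).2
  have hαK : Mq * α K ≤ 1 / 2 := by
    have hKn : ‖xs K - xstar‖ ≤ 1 / (2 * Mq) := by
      have := (hK0 K (le_max_left _ _)).2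
      exact le_of_lt (lt_of_lt_of_le this (min_le_left _ _))
    have hKd : ds K ≤ 1 / (2 * Mq) := le_trans (hds K).2 hδ'Mq
    have : α K ≤ 1 / (2 * Mq) := max_le hKn hKd
    have h2 := mul_le_mul_of_nonneg_left this hMqpos.le
    have hcalc : Mq * (1 / (2 * Mq)) = 1 / 2 := by
      field_simp
    linarith
  have hgeo : ∀ j : ℕ, Mq * α (K + j) ≤ (1 / 2 : ℝ) ^ (j + 1) := by
    intro j
    induction j with
    | zero => simpa using hαK
    | succ j ih =>
      have h1 : α (K + j + 1) ≤ Mq * α (K + j) ^ 2 := hquad (K + j) (Nat.le_add_right K j)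
      have h2 : Mq * α (K + j + 1) ≤ (Mq * α (K + j)) ^ 2 := by
        have := mul_le_mul_of_nonneg_left h1 hMqpos.le
        calc Mq * α (K + j + 1) ≤ Mq * (Mq * α (K + j) ^ 2) := this
          _ = (Mq * α (K + j)) ^ 2 := by ring
      have h3 : (Mq * α (K + j)) ^ 2 ≤ ((1 / 2 : ℝ) ^ (j + 1)) ^ 2 := by
        apply pow_le_pow_left₀ (mul_nonneg hMqpos.le (hαnn _)) ih
      have h4 : ((1 / 2 : ℝ) ^ (j + 1)) ^ 2 ≤ (1 / 2 : ℝ) ^ (j + 1 + 1) := by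
        have hle1 : (1 / 2 : ℝ) ^ (j + 1) ≤ 1 / 2 :=
          pow_le_pow_of_le_one (by norm_num) (by norm_num) (by omega) |>.trans_eq (pow_one _)
        have hnn : (0:ℝ) ≤ (1 / 2 : ℝ) ^ (j + 1) := by positivity
        calc ((1 / 2 : ℝ) ^ (j + 1)) ^ 2 = (1 / 2 : ℝ) ^ (j + 1) * (1 / 2 : ℝ) ^ (j + 1) := by
              ring
          _ ≤ (1 / 2 : ℝ) ^ (j + 1) * (1 / 2) := mul_le_mul_of_nonneg_left hle1 hnn
          _ = (1 / 2 : ℝ) ^ (j + 1 + 1) := (pow_succ (1/2 : ℝ) (j + 1)).symm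
      have : K + (j + 1) = K + j + 1 := by omega
      rw [this]
      linarith
  have hαbound : ∀ k, K ≤ k → α k ≤ (1 / 2 : ℝ) ^ (k - K + 1) / Mq := by
    intro k hk
    obtain ⟨j, rfl⟩ := Nat.exists_eq_add_of_le hk
    have := hgeo j
    rw [le_div_iff₀ hMqpos]
    have hcomm : K + j - K = j := by omega
    rw [hcomm]
    linarith [this]
  have htendsto : Filter.Tendsto α Filter.atTop (nhds 0) := by
    have hg : Filter.Tendsto (fun k : ℕ => (1 / 2 : ℝ) ^ (k - K + 1) / Mq)
        Filter.atTop (nhds 0) := by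
      have h1 : Filter.Tendsto (fun k : ℕ => k - K + 1) Filter.atTop Filter.atTop := by
        apply Filter.tendsto_atTop_mono (fun k => by omega : ∀ k : ℕ, k - K ≤ k - K + 1)
        exact Filter.tendsto_sub_atTop_nat K
      have h2 : Filter.Tendsto (fun j : ℕ => (1 / 2 : ℝ) ^ j) Filter.atTop (nhds 0) :=
        tendsto_pow_atTop_nhds_zero_of_lt_one (by norm_num) (by norm_num)
      have h3 := h2.comp h1
      have := h3.div_const Mq
      simpa using this
    apply squeeze_zero' (Filter.Eventually.of_forall hαnn) ?_ hg
    exact Filter.eventually_atTop.mpr ⟨K, hαbound⟩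
  exact ⟨α, htendsto, ⟨Mq, hMqpos, K, hquad⟩, ⟨K, fun k _ => le_max_left _ _⟩⟩
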